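/- Suppose ℓ'(0) > 0. Then the unique solution {a_t*} of the negative discount dynamic program has only finitely many nonzero terms: there exists T ∈ ℕ such that a_t* = 0 for all t > T. -/

import Mathlib

open Set Filter ENNReal

/-- Total discounted loss `∑_{t=0}^∞ β^t ℓ(a_t)` of an action sequence, valued in `ℝ≥0∞`
(divergent sums are `∞`; the losses `ℓ(a_t)` are nonnegative for feasible sequences). -/
noncomputable def totalLoss (β : ℝ) (ℓ : ℝ → ℝ) (a : ℕ → ℝ) : ℝ≥0∞ :=
  ∑' t, ENNReal.ofReal (β ^ t * ℓ (a t))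

/-- A sequence is feasible for remaining stock `x` if it is nonnegative and sums to `x`. -/
def Feasible (x : ℝ) (a : ℕ → ℝ) : Prop :=
  (∀ t, 0 ≤ a t) ∧ HasSum a x

/-- if `ℓ'(0) > 0`, the unique solution `{a_t*}` of the negative discount
dynamic program has only finitely many nonzero terms. -/
theorem optimal_sequence_finitely_many_nonzero_terms
    (xhat : ℝ) (hxhat : 0 < xhat)
    (ℓ ℓd : ℝ → ℝ)
    (hderiv : ∀ x ∈ Set.Icc 0 xhat, HasDerivAt ℓ (ℓd x) x)
    (hcont_deriv : ContinuousOn ℓd (Set.Icc 0 xhat))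
    (hconv : StrictConvexOn ℝ (Set.Icc 0 xhat) ℓ)
    (hzero : ℓ 0 = 0)
    (hpos : ∀ x ∈ Set.Icc 0 xhat, 0 < ℓd x)
    (hd0 : 0 < ℓd 0)
    (β : ℝ) (hβ : 1 < β)
    (astar : ℕ → ℝ)
    (hfeas : Feasible xhat astar)
    (hmin : ∀ a : ℕ → ℝ, Feasible xhat a → totalLoss β ℓ astar ≤ totalLoss β ℓ a) :
    ∃ T : ℕ, ∀ t : ℕ, T < t → astar t = 0 := by
  obtain ⟨hnn, hsum⟩ := hfeas
  have hβ0 : (0:ℝ) < β := lt_trans one_pos hβ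
  have hcontℓ : ContinuousOn ℓ (Set.Icc 0 xhat) := fun x hx =>
    (hderiv x hx).continuousAt.continuousWithinAt
  -- lower bound on ℓ via convexity: ℓd 0 * x ≤ ℓ x on (0, xhat]
  have hslope : ∀ x, 0 < x → x ≤ xhat → ℓd 0 * x ≤ ℓ x := by
    intro x hx hxle
    have h0 : (0:ℝ) ∈ Set.Icc 0 xhat := ⟨le_rfl, hxhat.le⟩
    have hxm : x ∈ Set.Icc 0 xhat := ⟨hx.le, hxle⟩
    have h := hconv.convexOn.le_slope_of_hasDerivAt h0 hxm hx (hderiv 0 h0)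
    rw [slope_def_field, hzero, sub_zero, sub_zero] at h
    calc ℓd 0 * x ≤ (ℓ x / x) * x := mul_le_mul_of_nonneg_right h hx.le
      _ = ℓ x := by field_simp
  have hℓnn : ∀ x, 0 ≤ x → x ≤ xhat → 0 ≤ ℓ x := by
    intro x hx hxle
    rcases hx.eq_or_lt with h | h
    · simp [← h, hzero]
    · exact le_trans (by positivity) (hslope x h hxle)
  -- the optimum has finite total loss
  have hfin : totalLoss β ℓ astar ≠ ⊤ := by
    have hone : Feasible xhat (fun n => if n = 0 then xhat else 0) :=
      ⟨fun t => by by_cases h : t = 0 <;> simp [h, hxhat.le], hasSum_ite_eq 0 xhat⟩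
    have hval : totalLoss β ℓ (fun n => if n = 0 then xhat else 0)
        = ENNReal.ofReal (ℓ xhat) := by
      unfold totalLoss
      rw [tsum_eq_single 0 (fun n hn => by simp [hn, hzero])]
      simp
    have h2 := hmin _ hone
    rw [hval] at h2
    exact ne_top_of_le_ne_top ENNReal.ofReal_ne_top h2
  -- max of ℓd on the interval
  obtain ⟨m, hmmem, hMmax⟩ := isCompact_Icc.exists_isMaxOn
    (nonempty_Icc.mpr hxhat.le) hcont_deriv
  have hM : ∀ y ∈ Set.Icc 0 xhat, ℓd y ≤ ℓd m := fun y hy => hMmax hy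
  obtain ⟨T, hT⟩ := pow_unbounded_of_one_lt (ℓd m / ℓd 0) hβ
  refine ⟨T, fun t ht => ?_⟩
  by_contra hne
  have hat : 0 < astar t := (hnn t).lt_of_ne (Ne.symm hne)
  have ht0 : t ≠ 0 := by omega
  -- partial sum bounds
  have hsum2 : astar 0 + astar t ≤ xhat := by
    have := sum_le_hasSum ({0, t} : Finset ℕ) (fun i _ => hnn i) hsum
    rwa [Finset.sum_pair (Ne.symm ht0)] at this
  have ha0 : 0 ≤ astar 0 := hnn 0
  have hatxhat : astar t ≤ xhat := by linarith
  -- MVT on [astar 0, astar 0 + astar t]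
  have hlt : astar 0 < astar 0 + astar t := by linarith
  obtain ⟨c, hc, hceq⟩ := exists_hasDerivAt_eq_slope ℓ ℓd hlt
    (hcontℓ.mono (Icc_subset_Icc ha0 hsum2))
    (fun x hx => hderiv x ⟨le_trans ha0 hx.1.le, le_trans hx.2.le hsum2⟩)
  have hcmem : c ∈ Set.Icc 0 xhat := ⟨le_trans ha0 hc.1.le, le_trans hc.2.le hsum2⟩
  have hkey : ℓ (astar 0 + astar t) ≤ ℓ (astar 0) + ℓd m * astar t := by
    have h1 : ℓ (astar 0 + astar t) - ℓ (astar 0) = ℓd c * astar t := by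
      rw [hceq, add_sub_cancel_left, div_mul_cancel₀ _ hat.ne']
    nlinarith [hM c hcmem]
  have hβt : ℓd m < β ^ t * ℓd 0 := by
    have h1 : (β:ℝ) ^ T ≤ β ^ t := pow_le_pow_right₀ hβ.le ht.le
    have := (div_lt_iff₀ hd0).mp (lt_of_lt_of_le hT h1)
    linarith
  have hkey2 : ℓ (astar 0 + astar t) < ℓ (astar 0) + β ^ t * ℓ (astar t) := by
    have h2 : ℓd 0 * astar t ≤ ℓ (astar t) := hslope _ hat hatxhat
    have h3 : ℓd m * astar t < β ^ t * (ℓd 0 * astar t) := by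
      rw [← mul_assoc]; exact mul_lt_mul_of_pos_right hβt hat
    have h4 : β ^ t * (ℓd 0 * astar t) ≤ β ^ t * ℓ (astar t) :=
      mul_le_mul_of_nonneg_left h2 (by positivity)
    linarith
  -- the competing sequence
  set b : ℕ → ℝ := fun n => if n = 0 then astar 0 + astar t else if n = t then 0 else astar n
    with hb
  have hbfeas : Feasible xhat b := by
    constructor
    · intro n
      simp only [hb]
      split_ifs
      · linarith
      · exact le_rfl
      · exact hnn n
    · have h1 : HasSum (fun n => if n = 0 then astar t else (0:ℝ)) (astar t) :=
        hasSum_ite_eq 0 (astar t)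
      have h2 : HasSum (fun n => if n = t then astar t else (0:ℝ)) (astar t) :=
        hasSum_ite_eq t (astar t)
      have h3 := (hsum.add h1).sub h2
      have heq : b = fun n => astar n + (if n = 0 then astar t else 0)
          - (if n = t then astar t else 0) := by
        funext n
        rcases eq_or_ne n 0 with rfl | h0
        · simp [hb, Ne.symm ht0]
        · rcases eq_or_ne n t with rfl | h1
          · simp [hb, ht0]
          · simp [hb, h0, h1]
      rw [heq]
      simpa using h3
  -- tsum decompositions
  have hle := hmin b hbfeas
  set f : ℕ → ℝ≥0∞ := fun n => ENNReal.ofReal (β ^ n * ℓ (astar n)) with hf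
  set g : ℕ → ℝ≥0∞ := fun n => ENNReal.ofReal (β ^ n * ℓ (b n)) with hg
  set R : ℝ≥0∞ := ∑' n, ite (n = t) 0 (ite (n = 0) 0 (f n)) with hR
  have hfd : totalLoss β ℓ astar = f 0 + (f t + R) := by
    unfold totalLoss
    rw [ENNReal.summable.tsum_eq_add_tsum_ite' 0]
    congr 1
    rw [ENNReal.summable.tsum_eq_add_tsum_ite' t]
    simp [ht0, hf, hR]
  have hgd : totalLoss β ℓ b = g 0 + R := by
    unfold totalLoss
    rw [ENNReal.summable.tsum_eq_add_tsum_ite' 0]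
    congr 1
    rw [ENNReal.summable.tsum_eq_add_tsum_ite' t]
    have hgt : (if t = 0 then 0 else g t) = 0 := by
      simp [hg, hb, ht0, hzero]
    rw [hgt, zero_add, hR]
    apply tsum_congr
    intro n
    rcases eq_or_ne n t with rfl | hnt
    · simp
    · rcases eq_or_ne n 0 with rfl | hn0
      · simp
      · simp only [if_neg hnt, if_neg hn0, hg, hf, hb]
  have hRfin : R ≠ ⊤ := by
    refine ne_top_of_le_ne_top hfin ?_
    unfold totalLoss
    exact Summable.tsum_le_tsum (fun n => by split_ifs <;> simp [hf])
      ENNReal.summable ENNReal.summable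
  rw [hfd, hgd] at hle
  rw [← add_assoc] at hle
  have hle2 : f 0 + f t ≤ g 0 := (ENNReal.add_le_add_iff_right hRfin).mp hle
  have hlt2 : g 0 < f 0 + f t := by
    have hf0 : f 0 = ENNReal.ofReal (ℓ (astar 0)) := by simp [hf]
    have hg0 : g 0 = ENNReal.ofReal (ℓ (astar 0 + astar t)) := by simp [hg, hb]
    rw [hf0, hg0, hf, ← ENNReal.ofReal_add (hℓnn _ ha0 (by linarith))
      (mul_nonneg (by positivity) (hℓnn _ hat.le hatxhat))]
    refine (ENNReal.ofReal_lt_ofReal_iff ?_).mpr hkey2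
    have := hℓnn _ ha0 (by linarith : astar 0 ≤ xhat)
    have h2 : 0 < ℓ (astar t) :=
      lt_of_lt_of_le (by positivity) (hslope _ hat hatxhat)
    positivity
  exact absurd hle2 (not_le.mpr hlt2)
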